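/- arXiv:2209.08268 — 4 statements merged into one kernel-verified Lean document; each statement's English description precedes it below -/
import Mathlib

section
/- Let k, l be positive integers, A a k×k complex matrix and B an l×l complex matrix. Then the following are equivalent: (1) for every l×k complex matrix Y there exists a unique l×k complex matrix X satisfying X·A − B·X = Y; (2) the matrices A and B have no common eigenvalue (i.e. the spectra of A and B are disjoint). -/
set_option maxHeartbeats 1000000

open Polynomial Matrix

private lemma eval_charpoly'' {n : ℕ} (M : Matrix (Fin n) (Fin n) ℂ) (μ : ℂ) :
    M.charpoly.eval μ = (Matrix.diagonal (fun _ => μ) - M).det := by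
  have hd := RingHom.map_det (Polynomial.evalRingHom μ) M.charmatrix
  rw [Matrix.charpoly]
  show (Polynomial.evalRingHom μ) M.charmatrix.det = _
  rw [hd]
  congr 1
  ext i j
  by_cases h : i = j
  · subst h
    simp [charmatrix_apply_eq, Matrix.diagonal_apply_eq, Matrix.sub_apply]
  · simp [charmatrix_apply_ne _ _ _ h, Matrix.diagonal_apply_ne _ h, Matrix.sub_apply]

private lemma mem_spectrum_iff_charpoly' {n : ℕ} (M : Matrix (Fin n) (Fin n) ℂ) (μ : ℂ) :
    μ ∈ spectrum ℂ M ↔ M.charpoly.eval μ = 0 := by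
  rw [spectrum.mem_iff, Matrix.isUnit_iff_isUnit_det, isUnit_iff_ne_zero, not_not,
    eval_charpoly'']
  have hme : (algebraMap ℂ (Matrix (Fin n) (Fin n) ℂ)) μ = Matrix.diagonal (fun _ => μ) := by
    ext i j
    simp [Matrix.algebraMap_matrix_apply, Matrix.diagonal]
  rw [hme]

private lemma comm_aeval' {k l : ℕ} {A : Matrix (Fin k) (Fin k) ℂ}
    {B : Matrix (Fin l) (Fin l) ℂ} {X : Matrix (Fin l) (Fin k) ℂ}
    (h : X * A = B * X) (p : ℂ[X]) : X * aeval A p = aeval B p * X := by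
  have hpow : ∀ n : ℕ, X * A ^ n = B ^ n * X := by
    intro n
    induction n with
    | zero => simp
    | succ n ih =>
        rw [pow_succ, pow_succ, ← Matrix.mul_assoc, ih, Matrix.mul_assoc, h, ← Matrix.mul_assoc]
  induction p using Polynomial.induction_on' with
  | add p q hp hq => simp [map_add, Matrix.mul_add, Matrix.add_mul, hp, hq]
  | monomial n a =>
      rw [aeval_monomial, aeval_monomial, Algebra.algebraMap_eq_smul_one,
        Algebra.algebraMap_eq_smul_one, smul_mul_assoc, smul_mul_assoc, one_mul, one_mul,
        Matrix.mul_smul, hpow, Matrix.smul_mul]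

/-- **Sylvester equation solvability.** For `A : k×k` and `B : l×l` complex matrices
(`k, l > 0`), the equation `X·A − B·X = Y` has a unique solution `X` for every `Y`
iff `A` and `B` have no common eigenvalue. -/
theorem sylvester_unique_solution_iff_disjoint_spectra
    (k l : ℕ) (hk : 0 < k) (hl : 0 < l)
    (A : Matrix (Fin k) (Fin k) ℂ) (B : Matrix (Fin l) (Fin l) ℂ) :
    (∀ Y : Matrix (Fin l) (Fin k) ℂ,
        ∃! X : Matrix (Fin l) (Fin k) ℂ, X * A - B * X = Y) ↔
      spectrum ℂ A ∩ spectrum ℂ B = ∅ := by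
  constructor
  · intro h
    by_contra hne
    obtain ⟨μ, hμA, hμB⟩ := Set.nonempty_iff_ne_empty.mpr hne
    -- left eigenvector of A
    have hdetA : (Matrix.diagonal (fun _ => μ) - A).det = 0 := by
      rw [← eval_charpoly'', ← mem_spectrum_iff_charpoly']; exact hμA
    obtain ⟨u, hu0, hu⟩ := Matrix.exists_vecMul_eq_zero_iff.mpr hdetA
    have hdetB : (Matrix.diagonal (fun _ => μ) - B).det = 0 := by
      rw [← eval_charpoly'', ← mem_spectrum_iff_charpoly']; exact hμB
    obtain ⟨w, hw0, hw⟩ := Matrix.exists_mulVec_eq_zero_iff.mpr hdetB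
    have huA : u ᵥ* A = μ • u := by
      have := hu
      rw [Matrix.vecMul_sub] at this
      have h2 : u ᵥ* Matrix.diagonal (fun _ => μ) = μ • u := by
        ext j; simp [Matrix.vecMul_diagonal, mul_comm]
      rw [h2, sub_eq_zero] at this
      exact this.symm
    have hwB : B *ᵥ w = μ • w := by
      have := hw
      rw [Matrix.sub_mulVec] at this
      have h2 : Matrix.diagonal (fun _ => μ) *ᵥ w = μ • w := by
        ext i; simp [Matrix.mulVec_diagonal]
      rw [h2, sub_eq_zero] at this
      exact this.symm
    set X := Matrix.vecMulVec w u with hX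
    have hX0 : X ≠ 0 := by
      obtain ⟨i, hi⟩ := Function.ne_iff.mp hw0
      obtain ⟨j, hj⟩ := Function.ne_iff.mp hu0
      intro hc
      have h3 : w i * u j = 0 := by
        have h4 := congrFun (congrFun hc i) j
        simpa [hX, Matrix.vecMulVec_apply] using h4
      rcases mul_eq_zero.mp h3 with h | h
      · exact hi (by simpa using h)
      · exact hj (by simpa using h)
    have hXA : X * A = B * X := by
      ext i j
      simp only [Matrix.mul_apply, hX, Matrix.vecMulVec_apply]
      calc ∑ m, w i * u m * A m j = w i * ∑ m, u m * A m j := by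
            rw [Finset.mul_sum]; congr 1; ext m; ring
        _ = w i * (u ᵥ* A) j := rfl
        _ = w i * (μ * u j) := by rw [huA]; simp
        _ = (μ * w i) * u j := by ring
        _ = (B *ᵥ w) i * u j := by rw [hwB]; simp
        _ = ∑ m, B i m * (w m * u j) := by
            rw [Matrix.mulVec, dotProduct, Finset.sum_mul]
            congr 1; ext m; ring
    obtain ⟨X₀, _, huniq⟩ := h 0
    have e1 : X = X₀ := huniq X (by show X * A - B * X = 0; rw [hXA, sub_self])
    have e2 : (0 : Matrix (Fin l) (Fin k) ℂ) = X₀ := huniq 0 (by simp)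
    exact hX0 (e1.trans e2.symm)
  · intro hdisj
    -- the Sylvester operator
    set T : Matrix (Fin l) (Fin k) ℂ →ₗ[ℂ] Matrix (Fin l) (Fin k) ℂ :=
      { toFun := fun X => X * A - B * X
        map_add' := fun X Y => by simp only [Matrix.add_mul, Matrix.mul_add]; abel
        map_smul' := fun c X => by simp [Matrix.smul_mul, Matrix.mul_smul, smul_sub] } with hT
    -- aeval B (charpoly A) is a unit
    have hU : IsUnit (aeval B A.charpoly) := by
      by_contra hnu
      have h0 : (0 : ℂ) ∈ spectrum ℂ (aeval B A.charpoly) := (spectrum.zero_mem_iff ℂ).mpr hnu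
      rw [spectrum.map_polynomial_aeval_of_degree_pos B A.charpoly (by
        rw [Matrix.charpoly_degree_eq_dim]
        exact_mod_cast (by simpa using hk))] at h0
      obtain ⟨μ, hμB, hμ0⟩ := h0
      have hμA : μ ∈ spectrum ℂ A := (mem_spectrum_iff_charpoly' A μ).mpr hμ0
      have : μ ∈ spectrum ℂ A ∩ spectrum ℂ B := ⟨hμA, hμB⟩
      rw [hdisj] at this
      exact this
    have hinj : Function.Injective T := by
      rw [← LinearMap.ker_eq_bot, LinearMap.ker_eq_bot']
      intro X hX0
      have hXA : X * A = B * X := sub_eq_zero.mp hX0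
      have hc := comm_aeval' hXA A.charpoly
      rw [Matrix.aeval_self_charpoly, Matrix.mul_zero] at hc
      have hz : (aeval B) A.charpoly * X = 0 := hc.symm
      have hz' : (↑hU.unit : Matrix (Fin l) (Fin l) ℂ) * X = 0 := by
        rw [hU.unit_spec]; exact hz
      calc X = ((↑hU.unit⁻¹ : Matrix (Fin l) (Fin l) ℂ) * ↑hU.unit) * X := by
              rw [Units.inv_mul, Matrix.one_mul]
        _ = (↑hU.unit⁻¹ : Matrix (Fin l) (Fin l) ℂ) * ((↑hU.unit : Matrix (Fin l) (Fin l) ℂ) * X) := by rw [Matrix.mul_assoc]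
        _ = 0 := by rw [hz', Matrix.mul_zero]
    have hsurj : Function.Surjective T := (LinearMap.injective_iff_surjective).mp hinj
    intro Y
    obtain ⟨X, hX⟩ := hsurj Y
    exact ⟨X, hX, fun X' hX' => hinj (show T X' = T X from hX'.trans hX.symm)⟩
end

section
/- Let V be a complex vector space, ∘ a symmetric ℂ-bilinear product on V, and Q : V → V a ℂ-linear endomorphism satisfying Q(X∘Y) = X∘(Q Y) − X∘Y for all X, Y ∈ V. If X, Y, Z ∈ V satisfy Q X = λ·X, Q Y = λ·Y and Q Z = λ·Z for the same λ ∈ ℂ, then (X∘Y)∘Z = 0. -/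
/-- If `Q(X∘Y) = X∘(QY) − X∘Y` for a symmetric bilinear product `∘`, and
`X`, `Y`, `Z` are eigenvectors of `Q` for the same eigenvalue `λ`, then
`(X∘Y)∘Z = 0`. -/
theorem triple_mul_eq_zero_same_eigenvalue
    (V : Type) [AddCommGroup V] [Module ℂ V]
    (mul : V →ₗ[ℂ] V →ₗ[ℂ] V)
    (hcomm : ∀ X Y : V, mul X Y = mul Y X)
    (Q : V →ₗ[ℂ] V)
    (hQ : ∀ X Y : V, Q (mul X Y) = mul X (Q Y) - mul X Y)
    (lam : ℂ) (X Y Z : V)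
    (hX : Q X = lam • X) (hY : Q Y = lam • Y) (hZ : Q Z = lam • Z) :
    mul (mul X Y) Z = 0 := by
  set W := mul (mul X Y) Z with hW
  have h1 : Q (mul X Y) = (lam - 1) • mul X Y := by
    rw [hQ X Y, hY, map_smul, sub_smul, one_smul]
  have h2 : Q W = (lam - 1) • W := by
    rw [hW, hQ (mul X Y) Z, hZ, map_smul, sub_smul, one_smul]
  have h3 : Q W = (lam - 2) • W := by
    rw [hW, hcomm (mul X Y) Z, hQ Z (mul X Y), h1, map_smul, hcomm Z (mul X Y)]
    rw [sub_smul, sub_smul, one_smul]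
    ring_nf
    module
  have : (lam - 1) • W = (lam - 2) • W := by rw [← h2, ← h3]
  have h4 : (1 : ℂ) • W = 0 := by
    have := sub_eq_zero.mpr this
    rw [← sub_smul] at this
    convert this using 2
    ring
  simpa using h4
end

section
/- Let V be a finite-dimensional complex inner product space with Hermitian inner product h, Q : V → V a ℂ-linear endomorphism that is self-adjoint with respect to h, and κ : V → V a conjugate-linear map (additive, with κ(c·x) = conj(c)·κ(x)) such that κ∘κ = id, h(κx, κy) = h(y, x) for all x, y ∈ V, and κ∘Q∘κ = −Q. If dim V is odd, then 0 is an eigenvalue of Q. -/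
open scoped ComplexConjugate

/-- Pointwise tt*-geometry: if `Q` is `h`-self-adjoint, `κ` is a
conjugate-linear involution compatible with `h`, `κQκ = −Q`, and `dim V` is
odd, then `0` is an eigenvalue of `Q`. -/
theorem zero_is_eigenvalue_of_odd_dim
    (V : Type) [NormedAddCommGroup V] [InnerProductSpace ℂ V]
    [FiniteDimensional ℂ V]
    (Q : V →ₗ[ℂ] V)
    (hsa : ∀ x y : V, (inner ℂ (Q x) y : ℂ) = inner ℂ x (Q y))
    (κ : V → V)
    (hadd : ∀ x y : V, κ (x + y) = κ x + κ y)
    (hsmul : ∀ (c : ℂ) (x : V), κ (c • x) = (conj c) • κ x)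
    (hinv : ∀ x : V, κ (κ x) = x)
    (hκh : ∀ x y : V, (inner ℂ (κ x) (κ y) : ℂ) = inner ℂ y x)
    (hκQ : ∀ x : V, κ (Q (κ x)) = -(Q x))
    (hodd : Odd (Module.finrank ℂ V)) :
    Module.End.HasEigenvalue Q 0 := by
  classical
  set n := Module.finrank ℂ V with hn
  have hnpos : 0 < n := hodd.pos
  have : Nonempty (Fin n) := ⟨⟨0, hnpos⟩⟩
  -- orthonormal basis
  let b : OrthonormalBasis (Fin n) ℂ V := stdOrthonormalBasis ℂ V
  -- its κ-image
  let c : Fin n → V := fun i => κ (b i)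
  have hbon : Orthonormal ℂ (⇑b) := b.orthonormal
  have hcon : Orthonormal ℂ c := by
    rw [orthonormal_iff_ite]
    intro i j
    have := orthonormal_iff_ite.mp hbon j i
    simpa [c, hκh, eq_comm] using this
  have hcard : Fintype.card (Fin n) = Module.finrank ℂ V := by simp [hn]
  let cb : Module.Basis (Fin n) ℂ V :=
    basisOfLinearIndependentOfCardEqFinrank hcon.linearIndependent hcard
  have hcb : ⇑cb = c := coe_basisOfLinearIndependentOfCardEqFinrank _ _
  let cB : OrthonormalBasis (Fin n) ℂ V :=
    OrthonormalBasis.mk hcon (by rw [← hcb]; exact cb.span_eq.ge)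
  have hcB : ⇑cB = c := OrthonormalBasis.coe_mk _ _
  -- matrices
  let A : Matrix (Fin n) (Fin n) ℂ := LinearMap.toMatrix b.toBasis b.toBasis Q
  let B : Matrix (Fin n) (Fin n) ℂ := LinearMap.toMatrix cB.toBasis cB.toBasis Q
  have hA : ∀ i j, A i j = inner ℂ (b i) (Q (b j)) := by
    intro i j
    simp only [A, LinearMap.toMatrix_apply]
    simp [OrthonormalBasis.coe_toBasis_repr_apply, OrthonormalBasis.repr_apply_apply]
  have hB : ∀ i j, B i j = inner ℂ (c i) (Q (c j)) := by
    intro i j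
    simp only [B, LinearMap.toMatrix_apply]
    simp [OrthonormalBasis.coe_toBasis_repr_apply, OrthonormalBasis.repr_apply_apply, hcB]
  -- key identity: A i j = - B j i
  have key : ∀ i j, A i j = - B j i := by
    intro i j
    rw [hA, hB]
    have h1 : Q (b j) = -κ (Q (κ (b j))) := by
      rw [hκQ]; simp
    rw [h1]
    have h2 : (inner ℂ (b i) (κ (Q (κ (b j)))) : ℂ) = inner ℂ (Q (κ (b j))) (κ (b i)) := by
      calc (inner ℂ (b i) (κ (Q (κ (b j)))) : ℂ)
          = inner ℂ (κ (κ (b i))) (κ (Q (κ (b j)))) := by rw [hinv]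
        _ = inner ℂ (Q (κ (b j))) (κ (b i)) := hκh _ _
    rw [inner_neg_right, h2, hsa]
  -- determinants
  have hdetAB : A.det = B.det := by
    simp only [A, B, LinearMap.det_toMatrix]
  have hAB : A = - B.transpose := by
    ext i j
    simp [key i j, Matrix.transpose_apply]
  have : A.det = - B.det := by
    rw [hAB, Matrix.det_neg, Matrix.det_transpose]
    rcases hodd with ⟨k, hk⟩
    simp [Fintype.card_fin, ← hn, hk, pow_add, pow_mul]
  have hdet0 : LinearMap.det Q = 0 := by
    have hABdet : B.det = - B.det := hdetAB.symm.trans this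
    have : B.det = 0 := by linear_combination (hABdet) / 2
    rw [← LinearMap.det_toMatrix cB.toBasis Q]
    exact this
  exact ((LinearMap.hasEigenvalue_zero_tfae Q).out 3 0).mp hdet0
end

section
/- Let X be a topological space and Q : X → M_r(ℂ) a continuous map into r×r complex matrices. Then the set of points p ∈ X such that for all eigenvalues λ, μ of Q(p) one has λ − μ ≠ 1 and λ − μ ≠ −1 is an open subset of X. -/
open Matrix Polynomial

variable {n : Type*} [Fintype n] [DecidableEq n]

lemma eval_charpoly' (A : Matrix n n ℂ) (μ : ℂ) :
    (Matrix.charpoly A).eval μ = (algebraMap ℂ (Matrix n n ℂ) μ - A).det := by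
  rw [Matrix.charpoly, eval_det]
  congr 1
  ext i j
  simp [charmatrix, Matrix.algebraMap_matrix_apply, Matrix.sub_apply, Matrix.diagonal_apply]

lemma mem_spectrum_iff_det' (A : Matrix n n ℂ) (μ : ℂ) :
    μ ∈ spectrum ℂ A ↔ (algebraMap ℂ (Matrix n n ℂ) μ - A).det = 0 := by
  rw [spectrum.mem_iff, Matrix.isUnit_iff_isUnit_det, isUnit_iff_ne_zero, not_ne_iff]

lemma mem_spectrum_of_root (A : Matrix n n ℂ) (μ : ℂ)
    (h : μ ∈ (Matrix.charpoly A).roots) : μ ∈ spectrum ℂ A := by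
  rw [mem_spectrum_iff_det', ← eval_charpoly']
  exact (Polynomial.isRoot_of_mem_roots h)

lemma exists_eigvec (A : Matrix n n ℂ) (μ : ℂ) (h : μ ∈ spectrum ℂ A) :
    ∃ v : n → ℂ, v ≠ 0 ∧ A.mulVec v = μ • v := by
  rw [mem_spectrum_iff_det'] at h
  obtain ⟨v, hv, hv0⟩ := (Matrix.exists_mulVec_eq_zero_iff).mpr h
  refine ⟨v, hv, ?_⟩
  rw [Matrix.sub_mulVec, sub_eq_zero] at hv0
  rw [← hv0, Matrix.algebraMap_eq_diagonal]
  ext i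
  simp [Matrix.mulVec_diagonal, Pi.algebraMap_apply, Algebra.algebraMap_self_apply]

lemma spectrum_transpose' (A : Matrix n n ℂ) : spectrum ℂ Aᵀ = spectrum ℂ A := by
  ext μ
  rw [mem_spectrum_iff_det', mem_spectrum_iff_det', ← Matrix.det_transpose
    (algebraMap ℂ (Matrix n n ℂ) μ - A), Matrix.transpose_sub]
  congr! 2
  rw [Matrix.algebraMap_eq_diagonal, Matrix.diagonal_transpose]

lemma pow_comm' (A B T : Matrix n n ℂ) (h : A * T = T * B) (k : ℕ) :
    A ^ k * T = T * B ^ k := by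
  induction k with
  | zero => simp
  | succ k ih =>
    rw [pow_succ, pow_succ, mul_assoc, h, ← mul_assoc, ih, mul_assoc]

lemma aeval_comm' (A B T : Matrix n n ℂ) (h : A * T = T * B) (p : ℂ[X]) :
    (aeval A p) * T = T * (aeval B p) := by
  induction p using Polynomial.induction_on' with
  | add p q hp hq => rw [map_add, map_add, add_mul, mul_add, hp, hq]
  | monomial k c =>
    rw [aeval_monomial, aeval_monomial, mul_assoc, pow_comm' A B T h, ← mul_assoc,
      ← mul_assoc]
    congr 1
    rw [Algebra.commutes]

lemma isUnit_list_prod' (s : List (Matrix n n ℂ)) (h : ∀ a ∈ s, IsUnit a) :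
    IsUnit s.prod := by
  induction s with
  | nil => simp
  | cons a s ih =>
    rw [List.prod_cons]
    exact (h a (List.mem_cons_self)).mul (ih fun b hb => h b (List.mem_cons_of_mem a hb))

lemma key_iff (A : Matrix n n ℂ) :
    (∃ T : Matrix n n ℂ, T ≠ 0 ∧ A * T - T * A - T = 0) ↔
    ∃ a ∈ spectrum ℂ A, ∃ b ∈ spectrum ℂ A, a - b = 1 := by
  constructor
  · rintro ⟨T, hT, heq⟩
    set B : Matrix n n ℂ := A + 1 with hB
    have heq' : A * T = T * B := by
      rw [hB, mul_add, mul_one]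
      rw [sub_sub, sub_eq_zero] at heq
      exact heq
    have h0 : T * aeval B (Matrix.charpoly A) = 0 := by
      rw [← aeval_comm' A B T heq', Matrix.aeval_self_charpoly, zero_mul]
    by_contra hc
    push_neg at hc
    have hall : ∀ lam ∈ (Matrix.charpoly A).roots, IsUnit (B - algebraMap ℂ (Matrix n n ℂ) lam) := by
      intro lam hlam
      by_contra hu
      have h1 : lam ∈ spectrum ℂ A := mem_spectrum_of_root A lam hlam
      have h2 : lam - 1 ∈ spectrum ℂ A := by
        rw [spectrum.mem_iff]
        intro hu2
        apply hu
        have : B - algebraMap ℂ (Matrix n n ℂ) lam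
            = -(algebraMap ℂ (Matrix n n ℂ) (lam - 1) - A) := by
          rw [map_sub, RingHom.map_one, hB]
          abel
        rw [this]
        exact hu2.neg
      exact hc lam h1 (lam - 1) h2 (by ring)
    have hfac := Polynomial.Splits.eq_prod_roots_of_monic
      (IsAlgClosed.splits (Matrix.charpoly A)) (Matrix.charpoly_monic A)
    have hfac' : Matrix.charpoly A
        = ((Matrix.charpoly A).roots.toList.map fun lam => X - C lam).prod := by
      conv_lhs => rw [hfac]
      rw [← Multiset.prod_toList, ← Multiset.prod_coe (List.map _ _), ← Multiset.map_coe,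
        Multiset.coe_toList, Multiset.prod_toList]
    have hunit : IsUnit (aeval B (Matrix.charpoly A)) := by
      rw [hfac', map_list_prod, List.map_map]
      apply isUnit_list_prod'
      intro a ha
      obtain ⟨lam, hlam, rfl⟩ := List.mem_map.mp ha
      have hlam' : lam ∈ (Matrix.charpoly A).roots := (Multiset.mem_toList).mp hlam
      simpa [Function.comp, map_sub, aeval_X, aeval_C] using hall lam hlam'

    obtain ⟨u, hu⟩ := hunit
    apply hT
    calc T = T * aeval B (Matrix.charpoly A) * ↑u⁻¹ := by
            rw [← hu, mul_assoc, u.mul_inv, mul_one]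
      _ = 0 := by rw [h0, zero_mul]
  · rintro ⟨a, ha, b, hb, hab⟩
    obtain ⟨v, hv, hAv⟩ := exists_eigvec A a ha
    obtain ⟨w, hw, hAw⟩ := exists_eigvec Aᵀ b (by rw [spectrum_transpose']; exact hb)
    refine ⟨Matrix.vecMulVec v w, ?_, ?_⟩
    · intro h0
      obtain ⟨i, hi⟩ := Function.ne_iff.mp hv
      obtain ⟨j, hj⟩ := Function.ne_iff.mp hw
      have := congrFun (congrFun h0 i) j
      rw [Matrix.vecMulVec_apply] at this
      simp only [Pi.zero_apply] at hi hj this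
      exact mul_ne_zero hi hj this
    · have h1 : A * Matrix.vecMulVec v w = Matrix.vecMulVec (A.mulVec v) w := by
        ext i j
        simp [Matrix.mul_apply, Matrix.vecMulVec_apply, Matrix.mulVec, dotProduct,
          Finset.sum_mul, mul_assoc]
      have h2 : Matrix.vecMulVec v w * A = Matrix.vecMulVec v (Aᵀ.mulVec w) := by
        ext i j
        simp only [Matrix.mul_apply, Matrix.vecMulVec_apply, Matrix.mulVec, dotProduct,
          Matrix.transpose_apply, Finset.mul_sum]
        exact Finset.sum_congr rfl fun k _ => by ring
      rw [h1, h2, hAv, hAw]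
      ext i j
      simp only [Matrix.sub_apply, Matrix.vecMulVec_apply, Pi.smul_apply, smul_eq_mul,
        Matrix.zero_apply]
      rw [sub_eq_iff_eq_add] at hab
      subst hab
      ring

def ISmat (A : Matrix n n ℂ) : Matrix (n × n) (n × n) ℂ :=
  Matrix.of fun q q' =>
    (if q'.2 = q.2 then A q.1 q'.1 else 0) - (if q'.1 = q.1 then A q'.2 q.2 else 0)
      - (if q' = q then 1 else 0)

lemma ISmat_mulVec (A : Matrix n n ℂ) (t : n × n → ℂ) (q : n × n) :
    (ISmat A).mulVec t q
      = (A * (Matrix.of fun i j => t (i, j)) - (Matrix.of fun i j => t (i, j)) * A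
          - (Matrix.of fun i j => t (i, j))) q.1 q.2 := by
  simp [ISmat, Matrix.mulVec, dotProduct, Matrix.mul_apply, Matrix.sub_apply,
    sub_mul, ite_mul, zero_mul, one_mul, Finset.sum_sub_distrib, Fintype.sum_prod_type,
    Finset.sum_ite_irrel, Finset.sum_ite_eq', Finset.sum_const_zero, Prod.mk.injEq, ite_and,
    Prod.mk.eta]
  exact Finset.sum_congr rfl fun k _ => mul_comm _ _

lemma ISmat_det_eq_zero_iff (A : Matrix n n ℂ) :
    (ISmat A).det = 0 ↔ ∃ a ∈ spectrum ℂ A, ∃ b ∈ spectrum ℂ A, a - b = 1 := by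
  rw [← Matrix.exists_mulVec_eq_zero_iff, ← key_iff]
  constructor
  · rintro ⟨t, ht, ht0⟩
    refine ⟨Matrix.of fun i j => t (i, j), ?_, ?_⟩
    · intro h
      apply ht
      funext q
      have := congrFun (congrFun h q.1) q.2
      simpa using this
    · ext i j
      have := congrFun ht0 (i, j)
      rw [ISmat_mulVec] at this
      simpa using this
  · rintro ⟨T, hT, hT0⟩
    refine ⟨fun q => T q.1 q.2, ?_, ?_⟩
    · intro h
      apply hT
      ext i j
      exact congrFun h (i, j)
    · funext q
      rw [ISmat_mulVec]
      have : (Matrix.of fun i j => T i j) = T := rfl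
      rw [this, hT0]
      rfl

/-- The IS condition is open: along a continuous family `Q : X → M_r(ℂ)`, the
set of points `p` where no difference of two eigenvalues of `Q p` equals `±1`
is open. -/
theorem isOpen_IS_condition
    {X : Type} [TopologicalSpace X] {r : ℕ}
    (Q : X → Matrix (Fin r) (Fin r) ℂ) (hQ : Continuous Q) :
    IsOpen {p : X | ∀ a ∈ spectrum ℂ (Q p), ∀ b ∈ spectrum ℂ (Q p),
      a - b ≠ 1 ∧ a - b ≠ -1} := by
  have hcont : Continuous fun p => (ISmat (Q p)).det := by
    apply Continuous.matrix_det
    apply continuous_matrix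
    intro q q'
    apply Continuous.sub
    apply Continuous.sub
    · split_ifs
      · exact hQ.matrix_elem _ _
      · exact continuous_const
    · split_ifs
      · exact hQ.matrix_elem _ _
      · exact continuous_const
    · exact continuous_const
  have hset : {p : X | ∀ a ∈ spectrum ℂ (Q p), ∀ b ∈ spectrum ℂ (Q p),
      a - b ≠ 1 ∧ a - b ≠ -1} = (fun p => (ISmat (Q p)).det) ⁻¹' {(0 : ℂ)}ᶜ := by
    ext p
    simp only [Set.mem_setOf_eq, Set.mem_preimage, Set.mem_compl_iff, Set.mem_singleton_iff]
    rw [← not_iff_not, not_not, ISmat_det_eq_zero_iff]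
    constructor
    · intro h
      by_contra hc
      apply h
      intro a ha b hb
      constructor
      · intro h1; exact hc ⟨a, ha, b, hb, h1⟩
      · intro h1
        refine hc ⟨b, hb, a, ha, ?_⟩
        have : a - b = -1 := h1
        linear_combination -this
    · rintro ⟨a, ha, b, hb, hab⟩ h
      exact (h a ha b hb).1 hab
  rw [hset]
  exact isOpen_compl_singleton.preimage hcont
end
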